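/- Let S ⊆ ℕ be a finite set with 0 ∈ S. Suppose there exist an integer m ≥ 1 and a set T of residue classes in ℤ/mℤ such that every positive element of S has residue class in T, while for all t, t′ ∈ T the class t + t′ does not lie in T. Then S admits no nontrivial Minkowski decomposition: there are no sets A, B ⊆ ℕ with A ≠ {0}, B ≠ {0}, and A + B = S; equivalently, the Boolean polynomial with support S is irreducible. -/
import Mathlib


open Pointwise

/-- Proposition 8 (second part): if all positive elements of `S` have residue
classes mod `m` lying in a set `T` of residue classes such that the sum of any
two classes of `T` lies outside `T`, then `S` admits no nontrivial Minkowski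
decomposition `S = A + B`. -/
theorem boolean_irreducible_of_residue_classes (S : Finset ℕ) (h0 : 0 ∈ S)
    (m : ℕ) (hm : 1 ≤ m) (T : Set (ZMod m))
    (hin : ∀ s ∈ S, 0 < s → ((s : ZMod m) ∈ T))
    (hsum : ∀ t ∈ T, ∀ t' ∈ T, t + t' ∉ T) :
    ¬ ∃ A B : Set ℕ, A ≠ {0} ∧ B ≠ {0} ∧ A + B = (S : Set ℕ) := by
  rintro ⟨A, B, hA, hB, hAB⟩
  have h0' : (0 : ℕ) ∈ A + B := by rw [hAB]; exact_mod_cast h0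
  obtain ⟨a0, ha0, b0, hb0, hab0⟩ := h0'
  have ha00 : a0 = 0 := Nat.eq_zero_of_add_eq_zero_right hab0
  have hb00 : b0 = 0 := Nat.eq_zero_of_add_eq_zero_left hab0
  subst ha00; subst hb00
  -- A ⊆ S and B ⊆ S
  have hAS : ∀ a ∈ A, a ∈ S := fun a ha => by
    have : a ∈ A + B := ⟨a, ha, 0, hb0, (add_zero a)⟩
    rw [hAB] at this; exact_mod_cast this
  have hBS : ∀ b ∈ B, b ∈ S := fun b hb => by
    have : b ∈ A + B := ⟨0, ha0, b, hb, (zero_add b)⟩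
    rw [hAB] at this; exact_mod_cast this
  -- find positive elements of A and B
  have hposA : ∃ a ∈ A, 0 < a := by
    by_contra h
    push_neg at h
    apply hA
    ext x
    simp only [Set.mem_singleton_iff]
    constructor
    · intro hx; exact Nat.le_zero.mp (h x hx)
    · rintro rfl; exact ha0
  have hposB : ∃ b ∈ B, 0 < b := by
    by_contra h
    push_neg at h
    apply hB
    ext x
    simp only [Set.mem_singleton_iff]
    constructor
    · intro hx; exact Nat.le_zero.mp (h x hx)
    · rintro rfl; exact hb0
  obtain ⟨a, ha, hapos⟩ := hposA
  obtain ⟨b, hb, hbpos⟩ := hposB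
  have hta : ((a : ZMod m)) ∈ T := hin a (hAS a ha) hapos
  have htb : ((b : ZMod m)) ∈ T := hin b (hBS b hb) hbpos
  have habS : a + b ∈ S := by
    have : a + b ∈ A + B := ⟨a, ha, b, hb, rfl⟩
    rw [hAB] at this; exact_mod_cast this
  have : ((a + b : ℕ) : ZMod m) ∈ T := hin _ habS (by omega)
  rw [Nat.cast_add] at this
  exact hsum _ hta _ htb this
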